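/- Let k be a field with char k ≠ 2, let k₀₀, k₀₁, k₁₀, k₁₁ ∈ k, and let F = S + 2k₀₀P + k₀₁Q₀₁ + k₁₀Q₁₀ + k₁₁Q₁₁. Suppose all four partial derivatives ∂F/∂x₀₀, ∂F/∂x₀₁, ∂F/∂x₁₀, ∂F/∂x₁₁ vanish at a point (ϑ₀₀, ϑ₀₁, ϑ₁₀, ϑ₁₁) ∈ k⁴. Then k₀₁·(ϑ₀₀²ϑ₀₁² − ϑ₁₀²ϑ₁₁²) = −(ϑ₀₀⁴ + ϑ₀₁⁴ − ϑ₁₀⁴ − ϑ₁₁⁴), k₁₀·(ϑ₀₀²ϑ₁₀² − ϑ₀₁²ϑ₁₁²) = −(ϑ₀₀⁴ − ϑ₀₁⁴ + ϑ₁₀⁴ − ϑ₁₁⁴), and k₁₁·(ϑ₀₀²ϑ₁₁² − ϑ₀₁²ϑ₁₀²) = −(ϑ₀₀⁴ − ϑ₀₁⁴ − ϑ₁₀⁴ + ϑ₁₁⁴). -/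
import Mathlib


open MvPolynomial

/-- `S = x₀₀⁴+x₀₁⁴+x₁₀⁴+x₁₁⁴`, with variables `X 0 = x₀₀`, `X 1 = x₀₁`, `X 2 = x₁₀`,
`X 3 = x₁₁`. -/
noncomputable def S4 (k : Type*) [Field k] : MvPolynomial (Fin 4) k :=
  X 0 ^ 4 + X 1 ^ 4 + X 2 ^ 4 + X 3 ^ 4

/-- `P = x₀₀x₀₁x₁₀x₁₁`. -/
noncomputable def P4 (k : Type*) [Field k] : MvPolynomial (Fin 4) k :=
  X 0 * X 1 * X 2 * X 3

/-- `Q₀₁ = x₀₀²x₀₁² + x₁₀²x₁₁²`. -/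
noncomputable def Q01_4 (k : Type*) [Field k] : MvPolynomial (Fin 4) k :=
  X 0 ^ 2 * X 1 ^ 2 + X 2 ^ 2 * X 3 ^ 2

/-- `Q₁₀ = x₀₀²x₁₀² + x₀₁²x₁₁²`. -/
noncomputable def Q10_4 (k : Type*) [Field k] : MvPolynomial (Fin 4) k :=
  X 0 ^ 2 * X 2 ^ 2 + X 1 ^ 2 * X 3 ^ 2

/-- `Q₁₁ = x₀₀²x₁₁² + x₀₁²x₁₀²`. -/
noncomputable def Q11_4 (k : Type*) [Field k] : MvPolynomial (Fin 4) k :=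
  X 0 ^ 2 * X 3 ^ 2 + X 1 ^ 2 * X 2 ^ 2

/-- The Kummer quartic `F = S + 2k₀₀P + k₀₁Q₀₁ + k₁₀Q₁₀ + k₁₁Q₁₁`. -/
noncomputable def KummerF {k : Type*} [Field k] (k00 k01 k10 k11 : k) :
    MvPolynomial (Fin 4) k :=
  S4 k + C (2 * k00) * P4 k + C k01 * Q01_4 k + C k10 * Q10_4 k + C k11 * Q11_4 k

/-- If all four partial derivatives of `F = S + 2k₀₀P + k₀₁Q₀₁ + k₁₀Q₁₀ + k₁₁Q₁₁`
vanish at `(ϑ₀₀, ϑ₀₁, ϑ₁₀, ϑ₁₁)`, then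
`k₀₁(ϑ₀₀²ϑ₀₁² − ϑ₁₀²ϑ₁₁²) = −(ϑ₀₀⁴+ϑ₀₁⁴−ϑ₁₀⁴−ϑ₁₁⁴)`, and similarly for `k₁₀`, `k₁₁`. -/
lemma pderiv_two {k : Type*} [Field k] (z : Fin 4) :
    pderiv z (2 : MvPolynomial (Fin 4) k) = 0 := by
  rw [← map_ofNat (C : k →+* MvPolynomial (Fin 4) k) 2, pderiv_C]

set_option maxHeartbeats 1600000 in
theorem statement6 {k : Type*} [Field k] (hchar : ringChar k ≠ 2)
    (k00 k01 k10 k11 t00 t01 t10 t11 : k)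
    (hnode : ∀ z : Fin 4,
      eval ![t00, t01, t10, t11] (pderiv z (KummerF k00 k01 k10 k11)) = 0) :
    k01 * (t00 ^ 2 * t01 ^ 2 - t10 ^ 2 * t11 ^ 2)
        = -(t00 ^ 4 + t01 ^ 4 - t10 ^ 4 - t11 ^ 4) ∧
    k10 * (t00 ^ 2 * t10 ^ 2 - t01 ^ 2 * t11 ^ 2)
        = -(t00 ^ 4 - t01 ^ 4 + t10 ^ 4 - t11 ^ 4) ∧
    k11 * (t00 ^ 2 * t11 ^ 2 - t01 ^ 2 * t10 ^ 2)
        = -(t00 ^ 4 - t01 ^ 4 - t10 ^ 4 + t11 ^ 4) := by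

  have h2ne : (2:k) ≠ 0 := Ring.two_ne_zero hchar
  have h4ne : (4:k) ≠ 0 := by
    have : (4:k) = 2 * 2 := by norm_num
    rw [this]; exact mul_ne_zero h2ne h2ne
  have e0 : pderiv (0:Fin 4) (KummerF k00 k01 k10 k11)
      = C 4 * X 0 ^ 3 + C (2*k00) * (X 1 * X 2 * X 3) + C (2*k01) * (X 0 * X 1 ^ 2)
        + C (2*k10) * (X 0 * X 2 ^ 2) + C (2*k11) * (X 0 * X 3 ^ 2) := by
    simp (config := { decide := true }) [KummerF, S4, P4, Q01_4, Q10_4, Q11_4,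
      pderiv_X, Pi.single_apply, smul_eq_C_mul, map_mul, map_ofNat, pderiv_two]
    ring
  have e1 : pderiv (1:Fin 4) (KummerF k00 k01 k10 k11)
      = C 4 * X 1 ^ 3 + C (2*k00) * (X 0 * X 2 * X 3) + C (2*k01) * (X 1 * X 0 ^ 2)
        + C (2*k10) * (X 1 * X 3 ^ 2) + C (2*k11) * (X 1 * X 2 ^ 2) := by
    simp (config := { decide := true }) [KummerF, S4, P4, Q01_4, Q10_4, Q11_4,
      pderiv_X, Pi.single_apply, smul_eq_C_mul, map_mul, map_ofNat, pderiv_two]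
    ring
  have e2 : pderiv (2:Fin 4) (KummerF k00 k01 k10 k11)
      = C 4 * X 2 ^ 3 + C (2*k00) * (X 0 * X 1 * X 3) + C (2*k01) * (X 2 * X 3 ^ 2)
        + C (2*k10) * (X 2 * X 0 ^ 2) + C (2*k11) * (X 2 * X 1 ^ 2) := by
    simp (config := { decide := true }) [KummerF, S4, P4, Q01_4, Q10_4, Q11_4,
      pderiv_X, Pi.single_apply, smul_eq_C_mul, map_mul, map_ofNat, pderiv_two]
    ring
  have e3 : pderiv (3:Fin 4) (KummerF k00 k01 k10 k11)
      = C 4 * X 3 ^ 3 + C (2*k00) * (X 0 * X 1 * X 2) + C (2*k01) * (X 3 * X 2 ^ 2)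
        + C (2*k10) * (X 3 * X 1 ^ 2) + C (2*k11) * (X 3 * X 0 ^ 2) := by
    simp (config := { decide := true }) [KummerF, S4, P4, Q01_4, Q10_4, Q11_4,
      pderiv_X, Pi.single_apply, smul_eq_C_mul, map_mul, map_ofNat, pderiv_two]
    ring
  have h0 := hnode 0; rw [e0] at h0
  have h1 := hnode 1; rw [e1] at h1
  have h2 := hnode 2; rw [e2] at h2
  have h3 := hnode 3; rw [e3] at h3
  simp only [map_add, map_mul, map_pow, eval_C, eval_X, Matrix.cons_val_zero,
    Matrix.cons_val_one, Matrix.head_cons, Matrix.cons_val_two, Matrix.tail_cons,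
    Matrix.cons_val_three] at h0 h1 h2 h3
  refine ⟨?_, ?_, ?_⟩
  · refine mul_left_cancel₀ h4ne ?_
    linear_combination t00 * h0 + t01 * h1 - t10 * h2 - t11 * h3
  · refine mul_left_cancel₀ h4ne ?_
    linear_combination t00 * h0 - t01 * h1 + t10 * h2 - t11 * h3
  · refine mul_left_cancel₀ h4ne ?_
    linear_combination t00 * h0 - t01 * h1 - t10 * h2 + t11 * h3
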